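/- Let (G, v₁, v₂, p₁, …, p_k) be a watermelon graph. Then every cycle of G is formed by exactly two of the paths: for every vertex a and every closed walk c : G.Walk a a with c.IsCycle, there exist indices i ≠ j such that the edge set of c equals the union of the edge set of p_i and the edge set of p_j. -/

import Mathlib

/-- A watermelon graph: a simple graph `G` together with two distinct vertices `v₁, v₂`
and a nonempty family of pairwise internally disjoint paths `p i` of length at least 2
from `v₁` to `v₂` that cover all vertices and all edges of `G`. -/
structure SimpleGraph.IsWatermelon {V : Type*} (G : SimpleGraph V) (v₁ v₂ : V) {k : ℕ}
    (p : Fin k → G.Walk v₁ v₂) : Prop where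
  ne : v₁ ≠ v₂
  nonempty : 0 < k
  isPath : ∀ i, (p i).IsPath
  two_le_length : ∀ i, 2 ≤ (p i).length
  support_inter : ∀ i j, i ≠ j →
    {x | x ∈ (p i).support} ∩ {x | x ∈ (p j).support} = {v₁, v₂}
  support_cover : ∀ x : V, ∃ i, x ∈ (p i).support
  edge_cover : ∀ e ∈ G.edgeSet, ∃ i, e ∈ (p i).edges


section WatermelonHelpers

set_option linter.unusedSectionVars false

open SimpleGraph Walk


open SimpleGraph Walk

variable {V : Type*} {G : SimpleGraph V}

/-- A list containing two distinct elements has length ≥ 2. -/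
lemma wm_two_le_length {α : Type*} {l : List α} {a b : α} (ha : a ∈ l) (hb : b ∈ l)
    (hab : a ≠ b) : 2 ≤ l.length := by
  match l with
  | [] => simp at ha
  | [x] =>
    simp only [List.mem_singleton] at ha hb
    exact absurd (ha.trans hb.symm) hab
  | x :: y :: t => simp only [List.length_cons]; omega

/-- In a nodup list of length ≤ 2 containing distinct `a, b`, every element is `a` or `b`. -/
lemma wm_pair_eq {α : Type*} {l : List α} (hnd : l.Nodup) (hl : l.length ≤ 2) {a b e : α}
    (ha : a ∈ l) (hb : b ∈ l) (hab : a ≠ b) (he : e ∈ l) : e = a ∨ e = b := by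
  match l with
  | [] => simp at ha
  | [x] =>
    simp only [List.mem_singleton] at ha hb
    exact absurd (ha.trans hb.symm) hab
  | [x, y] =>
    simp only [List.mem_cons, List.mem_singleton, List.not_mem_nil, or_false] at ha hb he
    rcases ha with rfl | rfl <;> rcases hb with rfl | rfl <;>
      first | exact absurd rfl hab | tauto
  | x :: y :: z :: t => simp at hl

/-- Membership in an edge of a walk gives membership in the support. -/
lemma wm_mem_support_of_mem_edges {u w x : V} (q : G.Walk u w) {e : Sym2 V}
    (he : e ∈ q.edges) (hx : x ∈ e) : x ∈ q.support := by
  revert he hx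
  refine Sym2.ind (fun a b he hx => ?_) e
  rcases Sym2.mem_iff.mp hx with rfl | rfl
  · exact q.fst_mem_support_of_mem_edges he
  · exact q.snd_mem_support_of_mem_edges he

/-- Every vertex on a non-nil walk is incident to some edge of the walk. -/
lemma wm_exists_edge {u w x : V} (q : G.Walk u w) (hq : ¬ q.Nil) (hx : x ∈ q.support) :
    ∃ e ∈ q.edges, x ∈ e := by
  induction q with
  | nil => simp at hq
  | @cons a b' w' h q ih =>
    simp only [support_cons, List.mem_cons] at hx
    rcases hx with rfl | hx
    · exact ⟨s(x, b'), by simp, by simp⟩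
    · cases q with
      | nil =>
        simp only [support_nil, List.mem_singleton] at hx
        subst hx
        exact ⟨s(a, x), by simp, by simp⟩
      | cons h' q' =>
        obtain ⟨e, he, hxe⟩ := ih (by simp) hx
        exact ⟨e, by rw [edges_cons]; exact List.mem_cons_of_mem _ he, hxe⟩

variable [DecidableEq V]

lemma wm_countP_zero_of_not_mem {u w x : V} (q : G.Walk u w) (hx : x ∉ q.support) :
    q.edges.countP (fun e => x ∈ e) = 0 := by
  rw [List.countP_eq_zero]
  intro e he
  simp only [decide_eq_true_eq]
  exact fun hxe => hx (wm_mem_support_of_mem_edges q he hxe)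

/-- A path has at most one edge incident to its first vertex. -/
lemma wm_countP_start {u w : V} (q : G.Walk u w) (hq : q.IsPath) :
    q.edges.countP (fun e => u ∈ e) ≤ 1 := by
  cases q with
  | nil => simp
  | cons h q =>
    rw [cons_isPath_iff] at hq
    rw [edges_cons, List.countP_cons, wm_countP_zero_of_not_mem q hq.2]
    split <;> omega

/-- A path has at most one edge incident to its last vertex. -/
lemma wm_countP_end {u w : V} (q : G.Walk u w) (hq : q.IsPath) :
    q.edges.countP (fun e => w ∈ e) ≤ 1 := by
  have := wm_countP_start q.reverse hq.reverse
  rwa [edges_reverse, List.countP_reverse] at this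

/-- A path has at most two edges incident to any vertex. -/
lemma wm_countP_le_two {u w x : V} (q : G.Walk u w) (hq : q.IsPath) :
    q.edges.countP (fun e => x ∈ e) ≤ 2 := by
  induction q with
  | nil => simp
  | @cons a b' w' h q ih =>
    rw [cons_isPath_iff] at hq
    rw [edges_cons, List.countP_cons]
    by_cases hxa : x = a
    · subst hxa
      rw [wm_countP_zero_of_not_mem q hq.2]
      split <;> omega
    · by_cases hxb : x = b' 
      · subst hxb
        have := wm_countP_start q hq.1
        split <;> omega
      · have h0 : (decide (x ∈ s(a, b')) : Bool) = false := by
          simp [Sym2.mem_iff, hxa, hxb]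
        rw [h0]
        simpa using ih hq.1


lemma wm_first_edge {u w : V} (q : G.Walk u w) (hq : ¬ q.Nil) :
    ∃ b, G.Adj u b ∧ s(u, b) ∈ q.edges := by
  cases q with
  | nil => simp at hq
  | cons h q' => exact ⟨_, h, by simp⟩

lemma wm_no_direct_edge {v₁ v₂ : V} {q : G.Walk v₁ v₂} (hq : q.IsPath) (hlen : 2 ≤ q.length) :
    s(v₁, v₂) ∉ q.edges := by
  cases q with
  | nil => simp at hlen
  | @cons _ b _ h q' =>
    rw [cons_isPath_iff] at hq
    intro hmem
    rw [edges_cons, List.mem_cons] at hmem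
    rcases hmem with heq | hmem
    · rw [Sym2.eq_iff] at heq
      rcases heq with ⟨-, rfl⟩ | ⟨h1, h2⟩
      · rw [isPath_iff_eq_nil] at hq
        have := hq.1
        subst this
        simp at hlen
      · exact h.ne h1
    · exact hq.2 (q'.fst_mem_support_of_mem_edges hmem)

variable [DecidableEq V]


lemma wm_cycle_countP_le_two {x : V} (d : G.Walk x x) (hd : d.IsCycle) :
    d.edges.countP (fun e => x ∈ e) ≤ 2 := by
  cases d with
  | nil => simp
  | cons h q =>
    rw [cons_isCycle_iff] at hd
    rw [edges_cons, List.countP_cons]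
    have := wm_countP_end q hd.1
    split <;> omega

lemma wm_cycle_countP {a x : V} (c : G.Walk a a) (hc : c.IsCycle) (hx : x ∈ c.support) :
    c.edges.countP (fun e => x ∈ e) = 2 := by
  have heven : Even (c.edges.countP fun e => x ∈ e) := by
    rw [hc.isTrail.even_countP_edges_iff x]
    simp
  have h1 : 0 < c.edges.countP (fun e => x ∈ e) := by
    rw [List.countP_pos_iff]
    obtain ⟨e, he, hxe⟩ := wm_exists_edge c hc.not_nil hx
    exact ⟨e, he, by simpa using hxe⟩
  have h2 : c.edges.countP (fun e => x ∈ e) ≤ 2 := by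
    have hperm := (rotate_edges c x hx).perm
    rw [← hperm.countP_eq]
    exact wm_cycle_countP_le_two _ (hc.rotate hx)
  obtain ⟨n, hn⟩ := heven
  omega

lemma wm_cycle_two_edges {a x : V} (c : G.Walk a a) (hc : c.IsCycle) (hx : x ∈ c.support) :
    ∃ f₁ f₂, f₁ ≠ f₂ ∧ f₁ ∈ c.edges ∧ x ∈ f₁ ∧ f₂ ∈ c.edges ∧ x ∈ f₂ ∧
      ∀ e ∈ c.edges, x ∈ e → e = f₁ ∨ e = f₂ := by
  have h2 := wm_cycle_countP c hc hx
  have hlen : (c.edges.filter (fun e => x ∈ e)).length = 2 := by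
    rw [← List.countP_eq_length_filter]; exact h2
  have hnd : (c.edges.filter (fun e => x ∈ e)).Nodup := hc.isTrail.edges_nodup.filter _
  obtain ⟨f₁, f₂, hfl⟩ := List.length_eq_two.mp hlen
  rw [hfl] at hnd
  simp only [List.nodup_cons, List.mem_singleton, List.nodup_nil, and_true] at hnd
  have hf₁ : f₁ ∈ c.edges.filter (fun e => x ∈ e) := by rw [hfl]; simp
  have hf₂ : f₂ ∈ c.edges.filter (fun e => x ∈ e) := by rw [hfl]; simp
  rw [List.mem_filter, decide_eq_true_eq] at hf₁ hf₂
  refine ⟨f₁, f₂, hnd.1, hf₁.1, hf₁.2, hf₂.1, hf₂.2, fun e he hxe => ?_⟩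
  have : e ∈ c.edges.filter (fun e => x ∈ e) := by
    rw [List.mem_filter, decide_eq_true_eq]; exact ⟨he, hxe⟩
  rw [hfl] at this
  simpa using this

section Watermelon

variable {v₁ v₂ : V} {k : ℕ} {p : Fin k → G.Walk v₁ v₂}
variable {a : V} {c : G.Walk a a}

/-- Any cycle edge at an internal vertex of `p i` belongs to `p i`. -/
lemma wm_absorb (hW : G.IsWatermelon v₁ v₂ p) {i : Fin k} {x : V} {e : Sym2 V}
    (he : e ∈ c.edges) (hxe : x ∈ e) (hxi : x ∈ (p i).support)
    (h1 : x ≠ v₁) (h2 : x ≠ v₂) : e ∈ (p i).edges := by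
  obtain ⟨j, hj⟩ := hW.edge_cover e (c.edges_subset_edgeSet he)
  by_cases hij : i = j
  · exact hij ▸ hj
  · have hxj : x ∈ (p j).support := wm_mem_support_of_mem_edges _ hj hxe
    have hmem : x ∈ ({v₁, v₂} : Set V) := by
      rw [← hW.support_inter i j hij]
      exact ⟨hxi, hxj⟩
    rcases hmem with h | h
    · exact absurd h h1
    · exact absurd h h2

/-- The exchange step at an internal vertex. -/
lemma wm_step (hW : G.IsWatermelon v₁ v₂ p) (hc : c.IsCycle) {i : Fin k} {x : V}
    {e₁ e₂ : Sym2 V} (h₁ : e₁ ∈ (p i).edges) (h₂ : e₂ ∈ (p i).edges)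
    (hx₁ : x ∈ e₁) (hx₂ : x ∈ e₂) (hne : e₁ ≠ e₂) (hv1 : x ≠ v₁) (hv2 : x ≠ v₂)
    (hc₁ : e₁ ∈ c.edges) : e₂ ∈ c.edges := by
  have hxc : x ∈ c.support := wm_mem_support_of_mem_edges c hc₁ hx₁
  obtain ⟨f₁, f₂, hff, hf₁c, hxf₁, hf₂c, hxf₂, hcov⟩ := wm_cycle_two_edges c hc hxc
  have hxi : x ∈ (p i).support := wm_mem_support_of_mem_edges _ h₁ hx₁
  have hf₁p : f₁ ∈ (p i).edges := wm_absorb hW hf₁c hxf₁ hxi hv1 hv2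
  have hf₂p : f₂ ∈ (p i).edges := wm_absorb hW hf₂c hxf₂ hxi hv1 hv2
  have hlnd : ((p i).edges.filter (fun e => x ∈ e)).Nodup :=
    (hW.isPath i).isTrail.edges_nodup.filter _
  have hllen : ((p i).edges.filter (fun e => x ∈ e)).length ≤ 2 := by
    rw [← List.countP_eq_length_filter]
    exact wm_countP_le_two _ (hW.isPath i)
  have hmf : ∀ g ∈ (p i).edges, x ∈ g → g ∈ (p i).edges.filter (fun e => x ∈ e) := by
    intro g hg hxg
    rw [List.mem_filter, decide_eq_true_eq]
    exact ⟨hg, hxg⟩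
  have hg₁ := wm_pair_eq hlnd hllen (hmf _ h₁ hx₁) (hmf _ h₂ hx₂) hne (hmf _ hf₁p hxf₁)
  have hg₂ := wm_pair_eq hlnd hllen (hmf _ h₁ hx₁) (hmf _ h₂ hx₂) hne (hmf _ hf₂p hxf₂)
  rcases hg₁ with h | h
  · rcases hg₂ with h' | h'
    · exact absurd (h.trans h'.symm) hff
    · exact h' ▸ hf₂c
  · exact h ▸ hf₁c

/-- Propagation: if some edge of a suitable path is on the cycle, all of its edges are. -/
lemma wm_prop (hW : G.IsWatermelon v₁ v₂ p) (hc : c.IsCycle) (i : Fin k) :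
    ∀ {u w : V} (q : G.Walk u w), q.IsPath → (∀ e ∈ q.edges, e ∈ (p i).edges) →
      (∀ x ∈ q.support, x ≠ u → x ≠ v₁) → (∀ x ∈ q.support, x ≠ w → x ≠ v₂) →
      ∀ e ∈ q.edges, e ∈ c.edges → ∀ f ∈ q.edges, f ∈ c.edges := by
  intro u w q
  induction q with
  | nil => intro _ _ _ _ e he; simp at he
  | @cons u b w h q' ih =>
    intro hp hsub inv1 inv2 e he hec f hf
    rw [cons_isPath_iff] at hp
    have hbv₁ : b ≠ v₁ := inv1 b (by simp) h.ne'
    have inv1' : ∀ x ∈ q'.support, x ≠ b → x ≠ v₁ := by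
      intro x hx _
      have hxu : x ≠ u := fun hh => hp.2 (hh ▸ hx)
      exact inv1 x (by simp [hx]) hxu
    have inv2' : ∀ x ∈ q'.support, x ≠ w → x ≠ v₂ := fun x hx => inv2 x (by simp [hx])
    have hsub' : ∀ e ∈ q'.edges, e ∈ (p i).edges := fun e he => hsub e (by simp [he])
    rw [edges_cons, List.mem_cons] at he hf
    rcases he with rfl | he' <;> rcases hf with rfl | hf'
    · exact hec
    · -- e = s(u,b) on cycle, f in tail
      cases q' with
      | nil => simp at hf'
      | @cons b d w h' q'' =>
        have hbw : b ≠ w := by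
          intro hh
          subst hh
          rw [isPath_iff_eq_nil] at hp
          exact absurd hp.1 (by simp)
        have hbv₂ : b ≠ v₂ := inv2 b (by simp) hbw
        have hdmem : d ∈ (cons h' q'').support := by
          simp [start_mem_support]
        have hnee : s(u, b) ≠ s(b, d) := by
          intro heq
          rcases Sym2.eq_iff.mp heq with ⟨rfl, -⟩ | ⟨rfl, -⟩
          · exact h.ne rfl
          · exact hp.2 hdmem
        have he'c : s(b, d) ∈ c.edges :=
          wm_step hW hc (hsub s(u, b) (by simp)) (hsub' s(b, d) (by simp)) (by simp) (by simp)
            hnee hbv₁ hbv₂ hec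
        exact ih hp.1 hsub' inv1' inv2' s(b, d) (by simp) he'c f hf'
    · -- e in tail on cycle, f = s(u,b)
      cases q' with
      | nil => simp at he'
      | @cons b d w h' q'' =>
        have hbw : b ≠ w := by
          intro hh
          subst hh
          rw [isPath_iff_eq_nil] at hp
          exact absurd hp.1 (by simp)
        have hbv₂ : b ≠ v₂ := inv2 b (by simp) hbw
        have hdmem : d ∈ (cons h' q'').support := by
          simp [start_mem_support]
        have hnee : s(b, d) ≠ s(u, b) := by
          intro heq
          rcases Sym2.eq_iff.mp heq with ⟨rfl, -⟩ | ⟨-, rfl⟩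
          · exact h.ne rfl
          · exact hp.2 hdmem
        have he'c : s(b, d) ∈ c.edges :=
          ih hp.1 hsub' inv1' inv2' e he' hec s(b, d) (by simp)
        exact wm_step hW hc (hsub' s(b, d) (by simp)) (hsub s(u, b) (by simp)) (by simp) (by simp)
          hnee hbv₁ hbv₂ he'c
    · exact ih hp.1 hsub' inv1' inv2' e he' hec f hf'

end Watermelon

end WatermelonHelpers

theorem watermelon_cycle_is_two_paths {V : Type*}
    (G : SimpleGraph V) (v₁ v₂ : V) {k : ℕ} (p : Fin k → G.Walk v₁ v₂)
    (hW : G.IsWatermelon v₁ v₂ p) :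
    ∀ (a : V) (c : G.Walk a a), c.IsCycle →
      ∃ i j, i ≠ j ∧
        {e | e ∈ c.edges} = {e | e ∈ (p i).edges} ∪ {e | e ∈ (p j).edges} := by
  classical
  intro a c hc
  have hnn : ∀ m, ¬ (p m).Nil := by
    intro m
    rw [SimpleGraph.Walk.nil_iff_length_eq]
    have := hW.two_le_length m
    omega
  have prop : ∀ m, ∀ e ∈ (p m).edges, e ∈ c.edges → ∀ f ∈ (p m).edges, f ∈ c.edges :=
    fun m => wm_prop hW hc m (p m) (hW.isPath m) (fun _ he => he)
      (fun _ _ h => h) (fun _ _ h => h)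
  have hepos : 0 < c.edges.length := by
    rw [c.length_edges]
    have := hc.three_le_length
    omega
  obtain ⟨e₀, he₀⟩ := List.exists_mem_of_length_pos hepos
  obtain ⟨m₀, hm₀⟩ := hW.edge_cover e₀ (c.edges_subset_edgeSet he₀)
  obtain ⟨b₀, hb₀, hb₀e⟩ := wm_first_edge (p m₀) (hnn m₀)
  have h1c : s(v₁, b₀) ∈ c.edges := prop m₀ e₀ hm₀ he₀ _ hb₀e
  have hv₁c : v₁ ∈ c.support := c.fst_mem_support_of_mem_edges h1c
  obtain ⟨f₁, f₂, hff, hf₁c, hxf₁, hf₂c, hxf₂, hcov⟩ := wm_cycle_two_edges c hc hv₁c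
  obtain ⟨i, hi⟩ := hW.edge_cover f₁ (c.edges_subset_edgeSet hf₁c)
  obtain ⟨j, hj⟩ := hW.edge_cover f₂ (c.edges_subset_edgeSet hf₂c)
  have hmf : ∀ g ∈ (p i).edges, v₁ ∈ g → g ∈ (p i).edges.filter (fun e => v₁ ∈ e) := by
    intro g hg hxg
    rw [List.mem_filter, decide_eq_true_eq]
    exact ⟨hg, hxg⟩
  have hij : i ≠ j := by
    rintro rfl
    have hcnt := wm_countP_start (p i) (hW.isPath i)
    have h2 : 2 ≤ ((p i).edges.filter (fun e => v₁ ∈ e)).length :=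
      wm_two_le_length (hmf f₁ hi hxf₁) (hmf f₂ hj hxf₂) hff
    rw [← List.countP_eq_length_filter] at h2
    omega
  have owner : ∀ (m n : Fin k) (e : Sym2 V), e ∈ (p m).edges → e ∈ (p n).edges →
      v₁ ∈ e → m = n := by
    intro m n e hm hn hv
    by_contra hmn
    revert hm hn hv
    refine Sym2.ind (fun x y hm hn hv => ?_) e
    have key : ∀ z : V, s(v₁, z) ∈ (p m).edges → s(v₁, z) ∈ (p n).edges → False := by
      intro z hzm hzn
      have hadj : G.Adj v₁ z := (p m).edges_subset_edgeSet hzm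
      have hzsm : z ∈ (p m).support := (p m).snd_mem_support_of_mem_edges hzm
      have hzsn : z ∈ (p n).support := (p n).snd_mem_support_of_mem_edges hzn
      have : z ∈ ({v₁, v₂} : Set V) := by
        rw [← hW.support_inter m n hmn]
        exact ⟨hzsm, hzsn⟩
      rcases this with rfl | rfl
      · exact hadj.ne rfl
      · exact wm_no_direct_edge (hW.isPath m) (hW.two_le_length m) hzm
    rcases Sym2.mem_iff.mp hv with rfl | rfl
    · exact key y hm hn
    · have hm' : s(v₁, x) ∈ (p m).edges := by rwa [Sym2.eq_swap] at hm
      have hn' : s(v₁, x) ∈ (p n).edges := by rwa [Sym2.eq_swap] at hn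
      exact key x hm' hn'
  refine ⟨i, j, hij, ?_⟩
  ext e
  simp only [Set.mem_setOf_eq, Set.mem_union]
  constructor
  · intro hec
    obtain ⟨m, hm⟩ := hW.edge_cover e (c.edges_subset_edgeSet hec)
    obtain ⟨b, hb, hbe⟩ := wm_first_edge (p m) (hnn m)
    have hbc : s(v₁, b) ∈ c.edges := prop m e hm hec _ hbe
    rcases hcov _ hbc (by simp) with hfe | hfe
    · left
      have : m = i := owner m i _ hbe (hfe ▸ hi) (by simp)
      exact this ▸ hm
    · right
      have : m = j := owner m j _ hbe (hfe ▸ hj) (by simp)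
      exact this ▸ hm
  · rintro (he | he)
    · exact prop i f₁ hi hf₁c e he
    · exact prop j f₂ hj hf₂c e he
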